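/- arXiv:0802.4242 — 5 statements merged into one kernel-verified Lean document; each statement's English description precedes it below -/
import Mathlib

section
/- If f(x) = a_n x^n + ... + a_1 x + a_0 is a polynomial with strictly positive real coefficients, then every complex root θ of f satisfies min{a_{i-1}/a_i : 1 ≤ i ≤ n} ≤ |θ| ≤ max{a_{i-1}/a_i : 1 ≤ i ≤ n}. -/
open Polynomial Finset

/-- Eneström–Kakeya theorem (1893): if `f` has strictly positive real coefficients, every
complex root `θ` satisfies `min_{1≤i≤n} a_{i-1}/a_i ≤ |θ| ≤ max_{1≤i≤n} a_{i-1}/a_i`. -/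
theorem enestrom_kakeya (f : Polynomial ℝ) (hn : 1 ≤ f.natDegree)
    (hpos : ∀ i ≤ f.natDegree, 0 < f.coeff i) (θ : ℂ)
    (hθ : (f.map (algebraMap ℝ ℂ)).eval θ = 0) :
    ((Finset.Icc 1 f.natDegree).inf'
        (Finset.nonempty_Icc.mpr hn) fun i => f.coeff (i - 1) / f.coeff i) ≤ ‖θ‖ ∧
    ‖θ‖ ≤ (Finset.Icc 1 f.natDegree).sup'
        (Finset.nonempty_Icc.mpr hn) fun i => f.coeff (i - 1) / f.coeff i := by
  set n := f.natDegree with hdeg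
  set a : ℕ → ℝ := f.coeff with ha
  set t := ‖θ‖ with htdef
  have hA : ∑ i ∈ Finset.range (n+1), (a i : ℂ) * θ ^ i = 0 := by
    rw [Polynomial.eval_map, Polynomial.eval₂_eq_sum_range] at hθ
    simpa [← hdeg, ← ha] using hθ
  have e1 : (∑ i ∈ Finset.range n, (a (i+1) : ℂ) * θ ^ (i+1)) + (a 0 : ℂ) * θ ^ 0 = 0 := by
    have h := Finset.sum_range_succ' (fun i => (a i : ℂ) * θ ^ i) n
    rw [← h]; exact hA
  have e2 : (∑ i ∈ Finset.range n, (a i : ℂ) * θ ^ i) + (a n : ℂ) * θ ^ n = 0 := by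
    have h := Finset.sum_range_succ (fun i => (a i : ℂ) * θ ^ i) n
    rw [← h]; exact hA
  have ht0 : 0 ≤ t := norm_nonneg θ
  have ha0 : 0 < a 0 := hpos 0 (by omega)
  have han : 0 < a n := hpos n le_rfl
  constructor
  · -- lower bound
    by_contra hcon
    push_neg at hcon
    set β := (Finset.Icc 1 n).inf' (Finset.nonempty_Icc.mpr hn) (fun i => a (i-1) / a i) with hβ
    have hβpos : 0 < β := by
      rw [hβ, Finset.lt_inf'_iff]
      intro i hi
      rw [Finset.mem_Icc] at hi
      exact div_pos (hpos _ (le_trans (Nat.sub_le i 1) hi.2)) (hpos _ hi.2)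
    have hcoef : ∀ i ∈ Finset.range n, β * a (i+1) ≤ a i := by
      intro i hi
      rw [Finset.mem_range] at hi
      have h1 : β ≤ a i / a (i+1) := by
        have h := Finset.inf'_le (f := fun j => a (j-1) / a j)
          (Finset.mem_Icc.mpr ⟨Nat.le_add_left 1 i, hi⟩)
        simp only [Nat.add_sub_cancel] at h
        exact h
      have := (le_div_iff₀ (hpos (i+1) hi)).mp h1
      linarith
    have split : ∑ i ∈ Finset.range n, ((a i - β * a (i+1) : ℝ) : ℂ) * θ ^ (i+1)
        = θ * (∑ i ∈ Finset.range n, (a i : ℂ) * θ ^ i)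
          - (β : ℂ) * (∑ i ∈ Finset.range n, (a (i+1) : ℂ) * θ ^ (i+1)) := by
      rw [Finset.mul_sum, Finset.mul_sum, ← Finset.sum_sub_distrib]
      refine Finset.sum_congr rfl fun i _ => ?_
      push_cast; ring
    have key : ((β * a 0 : ℝ) : ℂ)
        = (∑ i ∈ Finset.range n, ((a i - β * a (i+1) : ℝ) : ℂ) * θ ^ (i+1))
          + (a n : ℂ) * θ ^ (n+1) := by
      rw [split]
      push_cast
      linear_combination (β : ℂ) * e1 - θ * e2
    have hnormle : β * a 0
        ≤ (∑ i ∈ Finset.range n, (a i - β * a (i+1)) * t ^ (i+1)) + a n * t ^ (n+1) := by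
      calc β * a 0 = ‖((β * a 0 : ℝ) : ℂ)‖ := by
            rw [Complex.norm_real, Real.norm_of_nonneg (mul_nonneg hβpos.le ha0.le)]
        _ = ‖(∑ i ∈ Finset.range n, ((a i - β * a (i+1) : ℝ) : ℂ) * θ ^ (i+1))
              + (a n : ℂ) * θ ^ (n+1)‖ := by rw [key]
        _ ≤ ‖∑ i ∈ Finset.range n, ((a i - β * a (i+1) : ℝ) : ℂ) * θ ^ (i+1)‖
              + ‖(a n : ℂ) * θ ^ (n+1)‖ := norm_add_le _ _
        _ ≤ (∑ i ∈ Finset.range n, ‖((a i - β * a (i+1) : ℝ) : ℂ) * θ ^ (i+1)‖)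
              + ‖(a n : ℂ) * θ ^ (n+1)‖ := by
            gcongr
            exact norm_sum_le _ _
        _ = (∑ i ∈ Finset.range n, (a i - β * a (i+1)) * t ^ (i+1)) + a n * t ^ (n+1) := by
            rw [norm_mul, norm_pow, Complex.norm_real, Real.norm_of_nonneg han.le]
            congr 1
            refine Finset.sum_congr rfl fun i hi => ?_
            rw [norm_mul, norm_pow, Complex.norm_real,
              Real.norm_of_nonneg (by linarith [hcoef i hi])]
    have hmid : (∑ i ∈ Finset.range n, (a i - β * a (i+1)) * t ^ (i+1)) + a n * t ^ (n+1)
        ≤ (∑ i ∈ Finset.range n, (a i - t * a (i+1)) * t ^ (i+1)) + a n * t ^ (n+1) := by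
      refine add_le_add_left (Finset.sum_le_sum fun i hi => ?_) _
      have h1 : t * a (i+1) ≤ β * a (i+1) :=
        mul_le_mul_of_nonneg_right hcon.le (hpos (i+1) (Finset.mem_range.mp hi)).le
      have h2 : (0:ℝ) ≤ t ^ (i+1) := pow_nonneg ht0 _
      exact mul_le_mul_of_nonneg_right (by linarith) h2
    have htel : ∑ i ∈ Finset.range n, (a i - t * a (i+1)) * t ^ (i+1)
        = a 0 * t - a n * t ^ (n+1) := by
      have h := Finset.sum_range_sub (fun i => -(a i * t ^ (i+1))) n
      calc ∑ i ∈ Finset.range n, (a i - t * a (i+1)) * t ^ (i+1)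
          = ∑ i ∈ Finset.range n, (-(a (i+1) * t ^ (i+1+1)) - -(a i * t ^ (i+1))) :=
            Finset.sum_congr rfl fun i _ => by ring
        _ = -(a n * t ^ (n+1)) - -(a 0 * t ^ (0+1)) := h
        _ = a 0 * t - a n * t ^ (n+1) := by ring
    rw [htel] at hmid
    nlinarith
  · -- upper bound
    by_contra hcon
    push_neg at hcon
    set B := (Finset.Icc 1 n).sup' (Finset.nonempty_Icc.mpr hn) (fun i => a (i-1) / a i) with hB
    have hcoef : ∀ i ∈ Finset.range n, a i ≤ B * a (i+1) := by
      intro i hi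
      rw [Finset.mem_range] at hi
      have h1 : a i / a (i+1) ≤ B := by
        have h := Finset.le_sup' (f := fun j => a (j-1) / a j)
          (Finset.mem_Icc.mpr ⟨Nat.le_add_left 1 i, hi⟩)
        simp only [Nat.add_sub_cancel] at h
        exact h
      exact (div_le_iff₀ (hpos (i+1) hi)).mp h1
    have hBpos : 0 < B := by
      have h0 := hcoef 0 (Finset.mem_range.mpr (by omega))
      have h1 : 0 < a 1 := hpos 1 hn
      nlinarith
    have split : ∑ i ∈ Finset.range n, ((B * a (i+1) - a i : ℝ) : ℂ) * θ ^ (i+1)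
        = (B : ℂ) * (∑ i ∈ Finset.range n, (a (i+1) : ℂ) * θ ^ (i+1))
          - θ * (∑ i ∈ Finset.range n, (a i : ℂ) * θ ^ i) := by
      rw [Finset.mul_sum, Finset.mul_sum, ← Finset.sum_sub_distrib]
      refine Finset.sum_congr rfl fun i _ => ?_
      push_cast; ring
    have key : (a n : ℂ) * θ ^ (n+1)
        = ((a 0 * B : ℝ) : ℂ)
          + ∑ i ∈ Finset.range n, ((B * a (i+1) - a i : ℝ) : ℂ) * θ ^ (i+1) := by
      rw [split]
      push_cast
      linear_combination θ * e2 - (B : ℂ) * e1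
    have hnormle : a n * t ^ (n+1)
        ≤ a 0 * B + ∑ i ∈ Finset.range n, (B * a (i+1) - a i) * t ^ (i+1) := by
      calc a n * t ^ (n+1) = ‖(a n : ℂ) * θ ^ (n+1)‖ := by
            rw [norm_mul, norm_pow, Complex.norm_real, Real.norm_of_nonneg han.le]
        _ = ‖((a 0 * B : ℝ) : ℂ)
              + ∑ i ∈ Finset.range n, ((B * a (i+1) - a i : ℝ) : ℂ) * θ ^ (i+1)‖ := by rw [key]
        _ ≤ ‖((a 0 * B : ℝ) : ℂ)‖
              + ‖∑ i ∈ Finset.range n, ((B * a (i+1) - a i : ℝ) : ℂ) * θ ^ (i+1)‖ :=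
            norm_add_le _ _
        _ ≤ ‖((a 0 * B : ℝ) : ℂ)‖
              + ∑ i ∈ Finset.range n, ‖((B * a (i+1) - a i : ℝ) : ℂ) * θ ^ (i+1)‖ := by
            gcongr
            exact norm_sum_le _ _
        _ = a 0 * B + ∑ i ∈ Finset.range n, (B * a (i+1) - a i) * t ^ (i+1) := by
            rw [Complex.norm_real, Real.norm_of_nonneg (mul_nonneg ha0.le hBpos.le)]
            congr 1
            refine Finset.sum_congr rfl fun i hi => ?_
            rw [norm_mul, norm_pow, Complex.norm_real,
              Real.norm_of_nonneg (by linarith [hcoef i hi])]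
    have hmid : a 0 * B + ∑ i ∈ Finset.range n, (B * a (i+1) - a i) * t ^ (i+1)
        < a 0 * t + ∑ i ∈ Finset.range n, (t * a (i+1) - a i) * t ^ (i+1) := by
      refine add_lt_add_of_lt_of_le (by nlinarith) (Finset.sum_le_sum fun i hi => ?_)
      have h1 : B * a (i+1) ≤ t * a (i+1) :=
        mul_le_mul_of_nonneg_right hcon.le (hpos (i+1) (Finset.mem_range.mp hi)).le
      have h2 : (0:ℝ) ≤ t ^ (i+1) := pow_nonneg ht0 _
      exact mul_le_mul_of_nonneg_right (by linarith) h2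
    have htel : ∑ i ∈ Finset.range n, (t * a (i+1) - a i) * t ^ (i+1)
        = a n * t ^ (n+1) - a 0 * t := by
      have h := Finset.sum_range_sub (fun i => a i * t ^ (i+1)) n
      calc ∑ i ∈ Finset.range n, (t * a (i+1) - a i) * t ^ (i+1)
          = ∑ i ∈ Finset.range n, (a (i+1) * t ^ (i+1+1) - a i * t ^ (i+1)) :=
            Finset.sum_congr rfl fun i _ => by ring
        _ = a n * t ^ (n+1) - a 0 * t ^ (0+1) := h
        _ = a n * t ^ (n+1) - a 0 * t := by ring
    rw [htel] at hmid
    linarith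
end

section
/- If z_1 ≥ 1, z_2 ≥ 1, ..., z_n ≥ 1 are real numbers and σ_k denotes the k-th elementary symmetric function of z_1, ..., z_n, then σ_k ≤ C(n-1, k-1) · (z_1 z_2 ⋯ z_n) + C(n-1, k) for all 1 ≤ k ≤ n. -/
open Finset

private lemma esymm_aux {ι : Type*} [DecidableEq ι] (s : Finset ι) :
    ∀ (z : ι → ℝ), (∀ i ∈ s, 1 ≤ z i) → ∀ k : ℕ, 1 ≤ k → k ≤ s.card →
    ∑ t ∈ s.powersetCard k, ∏ i ∈ t, z i ≤
      ((s.card - 1).choose (k - 1) : ℝ) * ∏ i ∈ s, z i + ((s.card - 1).choose k : ℝ) := by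
  induction s using Finset.cons_induction with
  | empty =>
    intro z hz k hk1 hk2
    simp at hk2; omega
  | cons a s' ha ih =>
    intro z hz k hk1 hkn
    have hz' : ∀ i ∈ s', 1 ≤ z i := fun i hi => hz i (Finset.mem_cons.mpr (Or.inr hi))
    have hza : 1 ≤ z a := hz a (Finset.mem_cons_self a s')
    have hP' : 1 ≤ ∏ i ∈ s', z i := by
      have := Finset.prod_le_prod (s := s') (f := fun _ => (1:ℝ)) (g := z)
        (fun i _ => zero_le_one) (fun i hi => hz' i hi)
      simpa using this
    obtain ⟨j, rfl⟩ : ∃ j, k = j + 1 := ⟨k - 1, by omega⟩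
    set m := s'.card with hm
    have hcard : (Finset.cons a s' ha).card = m + 1 := Finset.card_cons ha
    -- split the sum
    have hdisj : Disjoint (s'.powersetCard (j+1))
        ((s'.powersetCard j).image (insert a)) := by
      rw [Finset.disjoint_left]
      intro t ht1 ht2
      obtain ⟨u, hu, rfl⟩ := Finset.mem_image.mp ht2
      have := (Finset.mem_powersetCard.mp ht1).1
      exact ha (this (Finset.mem_insert_self a u))
    have hnot : ∀ u ∈ s'.powersetCard j, a ∉ u := by
      intro u hu hau
      exact ha ((Finset.mem_powersetCard.mp hu).1 hau)
    have hsum : ∑ t ∈ (Finset.cons a s' ha).powersetCard (j+1), ∏ i ∈ t, z i =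
        (∑ t ∈ s'.powersetCard (j+1), ∏ i ∈ t, z i) +
          z a * ∑ t ∈ s'.powersetCard j, ∏ i ∈ t, z i := by
      rw [Finset.cons_eq_insert, Finset.powersetCard_succ_insert ha,
        Finset.sum_union hdisj, Finset.sum_image]
      · congr 1
        rw [Finset.mul_sum]
        apply Finset.sum_congr rfl
        intro u hu
        rw [Finset.prod_insert (hnot u hu)]
      · intro u hu v hv huv
        have hau := hnot u hu
        have hav := hnot v hv
        rw [← Finset.erase_insert hau, ← Finset.erase_insert hav, huv]
    rw [hsum, hcard, Finset.prod_cons]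
    simp only [Nat.add_sub_cancel]
    set A := ∑ t ∈ s'.powersetCard (j+1), ∏ i ∈ t, z i with hA
    set B := ∑ t ∈ s'.powersetCard j, ∏ i ∈ t, z i with hB
    rcases Nat.eq_zero_or_pos m with hm0 | hmpos
    · -- m = 0 : s' = ∅, j = 0
      have hj0 : j = 0 := by omega
      have hs'empty : s' = ∅ := Finset.card_eq_zero.mp hm0
      subst hj0 hs'empty
      have hA0 : A = 0 := by
        rw [hA, Finset.powersetCard_eq_empty.mpr (by simp), Finset.sum_empty]
      have hBval : B = 1 := by rw [hB]; simp
      rw [hA0, hBval]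
      simp [hm0]
    · rcases Nat.eq_zero_or_pos j with hj0 | hjpos
      · -- j = 0, k = 1
        subst hj0
        have hBval : B = 1 := by rw [hB]; simp
        have hAle : A ≤ ((m - 1).choose 0 : ℝ) * ∏ i ∈ s', z i + ((m - 1).choose 1 : ℝ) :=
          ih z hz' 1 le_rfl (by omega)
        rw [hBval]
        simp only [zero_add, Nat.choose_zero_right, Nat.choose_one_right, Nat.cast_one,
          one_mul] at hAle ⊢
        have hcast : ((m - 1 : ℕ) : ℝ) = (m : ℝ) - 1 := by
          rw [Nat.cast_sub hmpos]; simp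
        rw [hcast] at hAle
        nlinarith [mul_nonneg (sub_nonneg.mpr hP') (sub_nonneg.mpr hza)]
      · -- j ≥ 1
        obtain ⟨m', hm'⟩ : ∃ m', m = m' + 1 := ⟨m - 1, by omega⟩
        obtain ⟨j', rfl⟩ : ∃ j', j = j' + 1 := ⟨j - 1, by omega⟩
        rw [hm']
        have hkn' : j' + 2 ≤ m' + 2 := by omega
        rcases lt_or_eq_of_le hkn' with hlt | heq
        · -- j + 1 ≤ m
          have hAle : A ≤ (m'.choose (j'+1) : ℝ) * ∏ i ∈ s', z i + (m'.choose (j'+2) : ℝ) := by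
            have := ih z hz' (j'+2) (by omega) (by omega)
            rw [hm'] at this
            simpa using this
          have hBle : B ≤ (m'.choose j' : ℝ) * ∏ i ∈ s', z i + (m'.choose (j'+1) : ℝ) := by
            have := ih z hz' (j'+1) (by omega) (by omega)
            rw [hm'] at this
            simpa using this
          rw [show (m'+1).choose (j'+1) = m'.choose j' + m'.choose (j'+1) from
              Nat.choose_succ_succ m' j',
            show (m'+1).choose (j'+1+1) = m'.choose (j'+1) + m'.choose (j'+2) from
              Nat.choose_succ_succ m' (j'+1)]
          push_cast
          nlinarith [mul_nonneg (mul_nonneg (sub_nonneg.mpr hP') (sub_nonneg.mpr hza))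
              (Nat.cast_nonneg (α := ℝ) (m'.choose (j'+1))),
            Nat.cast_nonneg (α := ℝ) (m'.choose j'),
            Nat.cast_nonneg (α := ℝ) (m'.choose (j'+2))]
        · -- j + 1 = m + 1, i.e. j' = m'
          have hjm : j' = m' := by omega
          have hA0 : A = 0 := by
            rw [hA, Finset.powersetCard_eq_empty.mpr (by omega), Finset.sum_empty]
          have h1 : m'.choose j' = 1 := by rw [hjm, Nat.choose_self]
          have h2 : m'.choose (j'+1) = 0 := by rw [hjm]; exact Nat.choose_succ_self m'
          have hBle : B ≤ ∏ i ∈ s', z i := by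
            have := ih z hz' (j'+1) (by omega) (by omega)
            rw [hm'] at this
            simp only [Nat.add_sub_cancel, h1, h2, Nat.cast_one, Nat.cast_zero, one_mul,
              add_zero] at this
            rw [hB]
            exact this
          rw [hA0, hjm, Nat.choose_self, Nat.choose_succ_self]
          simp only [Nat.cast_one, Nat.cast_zero, one_mul, add_zero, zero_add]
          nlinarith [mul_le_mul_of_nonneg_left hBle (by linarith : (0:ℝ) ≤ z a)]
        
/-- Mignotte's symmetric function inequality: if `z_i ≥ 1` for all `i`, then the `k`-th
elementary symmetric function satisfies
`σ_k ≤ C(n-1, k-1) · (z_1 ⋯ z_n) + C(n-1, k)` for `1 ≤ k ≤ n`. -/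
theorem esymm_le (n : ℕ) (z : Fin n → ℝ) (hz : ∀ i, 1 ≤ z i) (k : ℕ) (hk1 : 1 ≤ k)
    (hkn : k ≤ n) :
    ∑ t ∈ Finset.powersetCard k Finset.univ, ∏ i ∈ t, z i ≤
      ((n - 1).choose (k - 1) : ℝ) * ∏ i, z i + ((n - 1).choose k : ℝ) := by
  have := esymm_aux (Finset.univ : Finset (Fin n)) z (fun i _ => hz i) k hk1
    (by simpa using hkn)
  simpa using this
end

section
/- If g(x) = b_m x^m + ... + b_0 divides f(x) = a_n x^n + ... + a_0 in ℤ[x], both nonzero, and g has the same leading coefficient sign convention, then for each k, |b_k| ≤ C(m, k) · M(f) where M(f) is the Mahler measure of f; in particular |b_k| ≤ C(m, k) · ‖f‖_2 · 2^0 holds via M(f) ≤ ‖f‖_2 (Landau's inequality). -/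
open Polynomial Finset

lemma mig_prod_max_nonneg (s : Multiset ℂ) : (0:ℝ) ≤ (s.map (fun w => max 1 ‖w‖)).prod := by
  apply Multiset.prod_nonneg; intro x hx
  simp only [Multiset.mem_map] at hx
  obtain ⟨y, _, rfl⟩ := hx
  positivity

lemma mig_one_le_prod_max (s : Multiset ℂ) : (1:ℝ) ≤ (s.map (fun w => max 1 ‖w‖)).prod := by
  apply Multiset.one_le_prod; intro x hx
  simp only [Multiset.mem_map] at hx
  obtain ⟨y, _, rfl⟩ := hx
  exact le_max_left _ _

lemma mig_coeff_prod_bound (t : Multiset ℂ) : ∀ (k : ℕ),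
    ‖((t.map (fun w => X - C w)).prod).coeff k‖ ≤
      (t.card.choose k : ℝ) * (t.map (fun w => max 1 ‖w‖)).prod := by
  induction t using Multiset.induction with
  | empty =>
      intro k
      simp only [Multiset.map_zero, Multiset.prod_zero, Multiset.card_zero]
      rcases k with _ | k <;> simp [Polynomial.coeff_one]
  | cons w s ih =>
      intro k
      have h1 : (1:ℝ) ≤ max 1 ‖w‖ := le_max_left _ _
      have hw : ‖w‖ ≤ max 1 ‖w‖ := le_max_right _ _
      have hP := mig_prod_max_nonneg s
      simp only [Multiset.map_cons, Multiset.prod_cons, Multiset.card_cons]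
      set Q := (s.map (fun w => X - C w)).prod with hQ
      set P : ℝ := (s.map (fun w => max 1 ‖w‖)).prod with hPdef
      have hkey : ∀ j, ((X - C w) * Q).coeff j = (X * Q).coeff j - w * Q.coeff j := by
        intro j; rw [sub_mul, coeff_sub, coeff_C_mul]
      rcases k with _ | k
      · rw [hkey 0, coeff_X_mul_zero, zero_sub, norm_neg, norm_mul]
        have h2 : ‖w‖ * ‖Q.coeff 0‖ ≤ (max 1 ‖w‖) * ((s.card.choose 0 : ℝ) * P) :=
          mul_le_mul hw (ih 0) (norm_nonneg _) (le_trans zero_le_one h1)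
        simp only [Nat.choose_zero_right, Nat.cast_one] at h2 ⊢
        linarith
      · rw [hkey (k+1), coeff_X_mul]
        have hnn : (0:ℝ) ≤ (s.card.choose k : ℝ) * P := mul_nonneg (Nat.cast_nonneg _) hP
        calc ‖Q.coeff k - w * Q.coeff (k+1)‖
            ≤ ‖Q.coeff k‖ + ‖w‖ * ‖Q.coeff (k+1)‖ := by
              refine (norm_sub_le _ _).trans ?_; rw [norm_mul]
          _ ≤ (max 1 ‖w‖) * ((s.card.choose k : ℝ) * P)
              + (max 1 ‖w‖) * ((s.card.choose (k+1) : ℝ) * P) :=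
              add_le_add ((ih k).trans (le_mul_of_one_le_left hnn h1))
                (mul_le_mul hw (ih (k+1)) (norm_nonneg _) (le_trans zero_le_one h1))
          _ = ((s.card + 1).choose (k+1) : ℝ) * ((max 1 ‖w‖) * P) := by
              rw [Nat.choose_succ_succ]; push_cast; ring

noncomputable def ltrans (w : ℂ) : Polynomial ℂ :=
  if 1 < ‖w‖ then C (starRingEnd ℂ w) * X - 1 else X - C w

lemma ltrans_ne_zero (w : ℂ) : ltrans w ≠ 0 := by
  unfold ltrans
  split
  · intro h
    have := congrArg (fun q => Polynomial.coeff q 0) h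
    simp at this
  · exact X_sub_C_ne_zero w

lemma ltrans_natDegree_le (w : ℂ) : (ltrans w).natDegree ≤ 1 := by
  unfold ltrans
  split
  · exact (natDegree_sub_le _ _).trans
      (max_le ((natDegree_C_mul_le _ _).trans natDegree_X.le) (by simp))
  · exact (natDegree_X_sub_C w).le

lemma ltrans_linear (w : ℂ) (hw : 1 < ‖w‖) :
    ltrans w = C (starRingEnd ℂ w) * X + C (-1) := by
  rw [ltrans, if_pos hw, map_neg, map_one, sub_eq_add_neg]

lemma conj_ne_zero_of_norm_gt (w : ℂ) (hw : 1 < ‖w‖) : (starRingEnd ℂ) w ≠ 0 := by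
  intro h
  have h2 : w = 0 := by simpa using congrArg (starRingEnd ℂ) h
  rw [h2] at hw
  norm_num at hw

lemma ltrans_natDegree (w : ℂ) : (ltrans w).natDegree = 1 := by
  by_cases hw : 1 < ‖w‖
  · rw [ltrans_linear w hw]
    exact natDegree_linear (conj_ne_zero_of_norm_gt w hw)
  · rw [ltrans, if_neg hw]; exact natDegree_X_sub_C w

lemma ltrans_leadingCoeff_norm (w : ℂ) : ‖(ltrans w).leadingCoeff‖ = max 1 ‖w‖ := by
  by_cases hw : 1 < ‖w‖
  · rw [ltrans_linear w hw, leadingCoeff_linear (conj_ne_zero_of_norm_gt w hw)]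
    rw [RCLike.norm_conj]
    exact (max_eq_right hw.le).symm
  · rw [ltrans, if_neg hw, leadingCoeff_X_sub_C, norm_one]
    exact (max_eq_left (not_lt.mp hw)).symm

lemma landau_step (w : ℂ) (p : Polynomial ℂ) (D : ℕ) (hD : p.natDegree + 2 ≤ D) :
    ∑ k ∈ range D, Complex.normSq (((X - C w) * p).coeff k)
      = ∑ k ∈ range D, Complex.normSq (((C (starRingEnd ℂ w) * X - 1) * p).coeff k) := by
  obtain ⟨D', rfl⟩ : ∃ D', D = D' + 1 := ⟨D - 1, by omega⟩
  have hcD' : p.coeff D' = 0 := coeff_eq_zero_of_natDegree_lt (by omega)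
  have hq1 : ∀ k, ((X - C w) * p).coeff k = (X * p).coeff k - w * p.coeff k := by
    intro k; rw [sub_mul, coeff_sub, coeff_C_mul]
  have hq2 : ∀ k, ((C (starRingEnd ℂ w) * X - 1) * p).coeff k
      = (starRingEnd ℂ w) * (X * p).coeff k - p.coeff k := by
    intro k
    have : (C (starRingEnd ℂ w) * X - 1) * p = C (starRingEnd ℂ w) * (X * p) - p := by ring
    rw [this, coeff_sub, coeff_C_mul]
  have hsum_u : ∑ k ∈ range (D' + 1), Complex.normSq ((X * p).coeff k)
      = ∑ k ∈ range (D' + 1), Complex.normSq (p.coeff k) := by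
    rw [Finset.sum_range_succ' _ D', Finset.sum_range_succ _ D']
    simp [coeff_X_mul, hcD']
  have key : ∀ k, Complex.normSq (((X - C w) * p).coeff k)
      - Complex.normSq (((C (starRingEnd ℂ w) * X - 1) * p).coeff k)
      = (1 - Complex.normSq w) * (Complex.normSq ((X * p).coeff k) - Complex.normSq (p.coeff k)) := by
    intro k
    rw [hq1, hq2]
    set x := (X * p).coeff k
    set y := p.coeff k
    simp only [Complex.normSq_apply, Complex.sub_re, Complex.sub_im, Complex.mul_re,
      Complex.mul_im, Complex.conj_re, Complex.conj_im]
    ring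
  have h0 : ∑ k ∈ range (D' + 1), (Complex.normSq (((X - C w) * p).coeff k)
      - Complex.normSq (((C (starRingEnd ℂ w) * X - 1) * p).coeff k)) = 0 := by
    simp only [key, ← Finset.mul_sum]
    rw [Finset.sum_sub_distrib, hsum_u]
    simp
  rw [Finset.sum_sub_distrib] at h0
  linarith

lemma landau_aux (t : Multiset ℂ) : ∀ (p : Polynomial ℂ), p ≠ 0 → ∀ D : ℕ,
    Multiset.card t + p.natDegree + 2 ≤ D →
    ∑ k ∈ range D, Complex.normSq (((t.map (fun w => X - C w)).prod * p).coeff k)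
      = ∑ k ∈ range D, Complex.normSq (((t.map ltrans).prod * p).coeff k) := by
  induction t using Multiset.induction with
  | empty => intro p hp D hD; simp
  | cons w s ih =>
      intro p hp D hD
      rw [Multiset.card_cons] at hD
      set S := (s.map (fun w => X - C w)).prod with hS
      have hSmonic : S.Monic :=
        monic_multiset_prod_of_monic s _ (fun x _ => monic_X_sub_C x)
      have hSdeg : S.natDegree = Multiset.card s := by
        rw [hS, natDegree_multiset_prod_X_sub_C_eq_card]
      have hSp : (S * p).natDegree = Multiset.card s + p.natDegree := by
        rw [natDegree_mul hSmonic.ne_zero hp, hSdeg]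
      have h1 : ((w ::ₘ s).map (fun w => X - C w)).prod * p = (X - C w) * (S * p) := by
        simp only [Multiset.map_cons, Multiset.prod_cons]; ring
      have hp' : (ltrans w * p) ≠ 0 := mul_ne_zero (ltrans_ne_zero w) hp
      have hdeg' : Multiset.card s + (ltrans w * p).natDegree + 2 ≤ D := by
        have h3 := natDegree_mul_le (p := ltrans w) (q := p)
        have h4 := ltrans_natDegree_le w
        omega
      have h2 : ((w ::ₘ s).map ltrans).prod * p = (s.map ltrans).prod * (ltrans w * p) := by
        simp only [Multiset.map_cons, Multiset.prod_cons]; ring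
      rw [h1, h2, ← ih (ltrans w * p) hp' D hdeg']
      by_cases hcase : 1 < ‖w‖
      · rw [landau_step w (S * p) D (by omega)]
        congr 1
        ext k
        congr 1
        rw [show ltrans w = C (starRingEnd ℂ w) * X - 1 from if_pos hcase]
        ring
      · congr 1
        ext k
        congr 1
        rw [show ltrans w = X - C w from if_neg hcase]
        ring

/-- Mignotte's factor bound: if `g` divides `f` in `ℤ[X]`, both nonzero, with
`f = a ∏ (x - z_i)` over `ℂ`, then each coefficient of `g` satisfies
`|b_k| ≤ C(m, k) · M(f)`, and, via Landau's inequality `M(f) ≤ ‖f‖₂`, also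
`|b_k| ≤ C(m, k) · ‖f‖₂`. -/
theorem mignotte_factor_bound (f g : Polynomial ℤ) (hf : f ≠ 0) (hg : g ≠ 0)
    (hdvd : g ∣ f) (n : ℕ) (a : ℂ) (ha : a ≠ 0) (z : Fin n → ℂ)
    (hfz : f.map (Int.castRingHom ℂ) = C a * ∏ i, (X - C (z i))) (k : ℕ) :
    (|g.coeff k| : ℝ) ≤ (g.natDegree.choose k : ℝ) * (‖a‖ * ∏ i, max 1 ‖z i‖) ∧
    (|g.coeff k| : ℝ) ≤ (g.natDegree.choose k : ℝ) *
      Real.sqrt (∑ i ∈ Finset.range (f.natDegree + 1), ((f.coeff i : ℝ)) ^ 2) := by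
  classical
  have hinj : Function.Injective (Int.castRingHom ℂ) := fun x y h => by
    simpa using congrArg Complex.re h
  set F := f.map (Int.castRingHom ℂ) with hFdef
  set G := g.map (Int.castRingHom ℂ) with hGdef
  have hF0 : F ≠ 0 := (Polynomial.map_ne_zero_iff hinj).mpr hf
  have hG0 : G ≠ 0 := (Polynomial.map_ne_zero_iff hinj).mpr hg
  set s : Multiset ℂ := Finset.univ.val.map z with hsdef
  have hcards : Multiset.card s = n := by simp [hsdef]
  have hprodeq : (∏ i, (X - C (z i)) : Polynomial ℂ) = (s.map fun w => X - C w).prod := by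
    rw [Finset.prod_eq_multiset_prod, hsdef, Multiset.map_map]
    rfl
  have hFfact : F = C a * (s.map fun w => X - C w).prod := by rw [hfz, hprodeq]
  have hmonicS : ((s.map fun w => X - C w).prod).Monic :=
    monic_multiset_prod_of_monic s _ (fun x _ => monic_X_sub_C x)
  have hdegF : F.natDegree = n := by
    rw [hFfact, natDegree_mul (C_ne_zero.mpr ha) hmonicS.ne_zero, natDegree_C,
      natDegree_multiset_prod_X_sub_C_eq_card, hcards, zero_add]
  have hfn : f.natDegree = n := by
    rw [← natDegree_map_eq_of_injective hinj f]; exact hdegF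
  have haF : F.leadingCoeff = a := by
    rw [hFfact, leadingCoeff_mul, leadingCoeff_C, hmonicS.leadingCoeff, mul_one]
  -- norm of a
  have hanorm : ‖a‖ = |(f.leadingCoeff : ℝ)| := by
    rw [← haF, hFdef, leadingCoeff_map_of_injective hinj]
    simp
  -- splitting of G
  have hGdvdF : G ∣ F := Polynomial.map_dvd _ hdvd
  have hFroots : F.roots = s := by
    rw [hFfact, roots_C_mul _ ha, roots_multiset_prod_X_sub_C]
  have hsplitF : F.Splits := by
    rw [splits_iff_card_roots, hFroots, hcards, hdegF]
  have hsplitG : G.Splits := hsplitF.of_dvd hF0 hGdvdF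
  set t : Multiset ℂ := G.roots with htdef
  have hts : t ≤ s := by
    have h1 : G.roots ≤ F.roots := roots.le_of_dvd hF0 hGdvdF
    rwa [hFroots] at h1
  have hcardt : Multiset.card t = g.natDegree := by
    rw [htdef, splits_iff_card_roots.mp hsplitG, hGdef, natDegree_map_eq_of_injective hinj]
  have hGfact : G = C G.leadingCoeff * (t.map fun w => X - C w).prod :=
    hsplitG.eq_prod_roots
  -- leading coefficient comparison
  have hleadnorm : ‖G.leadingCoeff‖ ≤ ‖a‖ := by
    rw [hGdef, leadingCoeff_map_of_injective hinj, hanorm]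
    obtain ⟨h, rfl⟩ := hdvd
    have hflead : (g * h).leadingCoeff = g.leadingCoeff * h.leadingCoeff := leadingCoeff_mul _ _
    have hfl0 : (g * h).leadingCoeff ≠ 0 := leadingCoeff_ne_zero.mpr hf
    have hdl : |g.leadingCoeff| ≤ |(g * h).leadingCoeff| := by
      apply Int.le_of_dvd (abs_pos.mpr hfl0)
      exact (abs_dvd _ _).mpr ((dvd_abs _ _).mpr ⟨h.leadingCoeff, hflead⟩)
    calc ‖((g.leadingCoeff : ℤ) : ℂ)‖ = |(g.leadingCoeff : ℝ)| := by simp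
      _ ≤ |((g*h).leadingCoeff : ℝ)| := by exact_mod_cast hdl
  -- products of max over t vs s
  have hprodmax : ((t.map fun w => max 1 ‖w‖).prod : ℝ) ≤ (s.map fun w => max 1 ‖w‖).prod := by
    obtain ⟨u, hu⟩ := Multiset.le_iff_exists_add.mp hts
    rw [hu, Multiset.map_add, Multiset.prod_add]
    exact le_mul_of_one_le_right (mig_prod_max_nonneg t) (mig_one_le_prod_max u)
  have hsmax : ((s.map fun w => max 1 ‖w‖).prod : ℝ) = ∏ i, max 1 ‖z i‖ := by
    rw [Finset.prod_eq_multiset_prod, hsdef, Multiset.map_map]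
    rfl
  -- coefficient of g
  have hcoeffG : (|g.coeff k| : ℝ) = ‖G.coeff k‖ := by
    rw [hGdef, coeff_map]
    simp [Int.cast_abs]
  -- Part 1
  have part1 : (|g.coeff k| : ℝ) ≤ (g.natDegree.choose k : ℝ) * (‖a‖ * ∏ i, max 1 ‖z i‖) := by
    rw [hcoeffG]
    calc ‖G.coeff k‖ = ‖G.leadingCoeff‖ * ‖((t.map fun w => X - C w).prod).coeff k‖ := by
          conv_lhs => rw [hGfact]
          rw [coeff_C_mul, norm_mul]
      _ ≤ ‖a‖ * ((g.natDegree.choose k : ℝ) * (t.map fun w => max 1 ‖w‖).prod) := by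
          apply mul_le_mul hleadnorm _ (norm_nonneg _) (norm_nonneg a)
          rw [← hcardt]
          exact mig_coeff_prod_bound t k
      _ ≤ ‖a‖ * ((g.natDegree.choose k : ℝ) * (s.map fun w => max 1 ‖w‖).prod) := by
          have := mul_le_mul_of_nonneg_left hprodmax
            (Nat.cast_nonneg (g.natDegree.choose k) : (0:ℝ) ≤ _)
          exact mul_le_mul_of_nonneg_left this (norm_nonneg a)
      _ = (g.natDegree.choose k : ℝ) * (‖a‖ * ∏ i, max 1 ‖z i‖) := by
          rw [hsmax]; ring
  refine ⟨part1, ?_⟩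
  -- Landau's inequality : M(f) ≤ ‖f‖₂
  have hlandau : ‖a‖ * ∏ i, max 1 ‖z i‖ ≤
      Real.sqrt (∑ i ∈ Finset.range (f.natDegree + 1), ((f.coeff i : ℝ)) ^ 2) := by
    set D := n + 2 with hDdef
    have haux := landau_aux s (C a) (C_ne_zero.mpr ha) D (by simp [hcards, hDdef])
    set q : Polynomial ℂ := (s.map ltrans).prod * C a with hqdef
    have hq0s : (0 : Polynomial ℂ) ∉ s.map ltrans := by
      intro h0
      simp only [Multiset.mem_map] at h0
      obtain ⟨w, _, hw⟩ := h0
      exact ltrans_ne_zero w hw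
    have hdegprod : ((s.map ltrans).prod).natDegree = n := by
      rw [natDegree_multiset_prod _ hq0s, Multiset.map_map]
      rw [show (Multiset.map (natDegree ∘ ltrans) s) = Multiset.map (fun _ => 1) s by
        apply Multiset.map_congr rfl
        intro x _
        exact ltrans_natDegree x]
      simp [hcards]
    have hprod0 : ((s.map ltrans).prod) ≠ 0 := by
      rw [Ne, Multiset.prod_eq_zero_iff]; exact hq0s
    have hdegq : q.natDegree = n := by
      rw [hqdef, natDegree_mul hprod0 (C_ne_zero.mpr ha), natDegree_C, hdegprod, add_zero]
    have hleadq : ‖q.leadingCoeff‖ = (‖a‖ * ∏ i, max 1 ‖z i‖) := by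
      rw [hqdef, leadingCoeff_mul, leadingCoeff_C, norm_mul]
      rw [leadingCoeff_multiset_prod, Multiset.map_map]
      have hn : ‖(Multiset.map (leadingCoeff ∘ ltrans) s).prod‖
          = (Multiset.map (fun w => max 1 ‖w‖) s).prod := by
        rw [show ‖(Multiset.map (leadingCoeff ∘ ltrans) s).prod‖ = normHom (Multiset.map (leadingCoeff ∘ ltrans) s).prod from rfl, map_multiset_prod, Multiset.map_map]
        apply congrArg
        apply Multiset.map_congr rfl
        intro x _
        simp only [Function.comp_apply]
        show ‖(ltrans x).leadingCoeff‖ = _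
        exact ltrans_leadingCoeff_norm x
      rw [hn, hsmax]; ring
    have hqcoeffn : q.coeff n = q.leadingCoeff := by
      rw [leadingCoeff, hdegq]
    have hMnn : (0:ℝ) ≤ ‖a‖ * ∏ i, max 1 ‖z i‖ := by
      rw [← hleadq]; exact norm_nonneg _
    have hsingle : Complex.normSq (q.coeff n) ≤ ∑ j ∈ range D, Complex.normSq (q.coeff j) :=
      Finset.single_le_sum (fun i _ => Complex.normSq_nonneg _)
        (Finset.mem_range.mpr (by omega))
    have hFq : (s.map (fun w => X - C w)).prod * C a = F := by rw [hFfact]; ring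
    rw [hFq] at haux
    have hsumF : ∑ j ∈ range D, Complex.normSq (F.coeff j)
        = ∑ i ∈ Finset.range (f.natDegree + 1), ((f.coeff i : ℝ)) ^ 2 := by
      have hD2 : D = (f.natDegree + 1) + 1 := by omega
      rw [hD2, Finset.sum_range_succ]
      have hzero : F.coeff (f.natDegree + 1) = 0 :=
        coeff_eq_zero_of_natDegree_lt (by omega)
      rw [hzero]
      simp only [map_zero, add_zero]
      apply Finset.sum_congr rfl
      intro i _
      rw [hFdef, coeff_map]
      rw [Complex.normSq_eq_norm_sq]
      have : ‖((Int.castRingHom ℂ) (f.coeff i))‖ = |(f.coeff i : ℝ)| := by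
        simp
      rw [this, sq_abs]
    have hfinal : (‖a‖ * ∏ i, max 1 ‖z i‖) ^ 2
        ≤ ∑ i ∈ Finset.range (f.natDegree + 1), ((f.coeff i : ℝ)) ^ 2 := by
      have h1 : (‖a‖ * ∏ i, max 1 ‖z i‖) ^ 2 = Complex.normSq (q.coeff n) := by
        rw [hqcoeffn, ← hleadq, Complex.normSq_eq_norm_sq]
      rw [h1, ← hsumF, haux]
      exact hsingle
    rw [show Real.sqrt (∑ i ∈ Finset.range (f.natDegree + 1), ((f.coeff i : ℝ)) ^ 2)
        = Real.sqrt (∑ i ∈ Finset.range (f.natDegree + 1), ((f.coeff i : ℝ)) ^ 2) from rfl]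
    calc ‖a‖ * ∏ i, max 1 ‖z i‖
        = Real.sqrt ((‖a‖ * ∏ i, max 1 ‖z i‖) ^ 2) := (Real.sqrt_sq hMnn).symm
      _ ≤ Real.sqrt (∑ i ∈ Finset.range (f.natDegree + 1), ((f.coeff i : ℝ)) ^ 2) :=
          Real.sqrt_le_sqrt hfinal
  calc (|g.coeff k| : ℝ) ≤ (g.natDegree.choose k : ℝ) * (‖a‖ * ∏ i, max 1 ‖z i‖) := part1
    _ ≤ (g.natDegree.choose k : ℝ) *
        Real.sqrt (∑ i ∈ Finset.range (f.natDegree + 1), ((f.coeff i : ℝ)) ^ 2) :=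
      mul_le_mul_of_nonneg_left hlandau (Nat.cast_nonneg _)
end

section
/- For any polynomial f ∈ ℂ[x] of degree n ≥ 1, the Mahler measure satisfies M(f) ≤ ‖f‖_2, where ‖f‖_2 is the Euclidean norm of the coefficient vector. -/
open Polynomial Finset

noncomputable def flipf (z : ℂ) : Polynomial ℂ :=
  if 1 < ‖z‖ then C (starRingEnd ℂ z) * X - C 1 else X - C z

noncomputable def Sq (N : ℕ) (p : Polynomial ℂ) : ℝ :=
  ∑ k ∈ Finset.range N, Complex.normSq (p.coeff k)

lemma ptwise (a b w : ℂ) :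
    Complex.normSq (a - w * b) - Complex.normSq (starRingEnd ℂ w * a - b)
      = (1 - Complex.normSq w) * (Complex.normSq a - Complex.normSq b) := by
  simp only [Complex.normSq_apply, Complex.sub_re, Complex.sub_im, Complex.mul_re,
    Complex.mul_im, Complex.conj_re, Complex.conj_im]
  ring

lemma swapL2 (w : ℂ) (p : Polynomial ℂ) (m : ℕ) (h : p.coeff (m + 1) = 0) :
    Sq (m + 2) ((X - C w) * p) = Sq (m + 2) ((C (starRingEnd ℂ w) * X - C 1) * p) := by
  have h1 : ∀ k, ((X - C w) * p).coeff (k + 1) = p.coeff k - w * p.coeff (k + 1) := by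
    intro k
    rw [sub_mul, coeff_sub, coeff_X_mul, coeff_C_mul]
  have h0 : ((X - C w) * p).coeff 0 = -(w * p.coeff 0) := by
    rw [sub_mul, coeff_sub, mul_coeff_zero, coeff_X_zero, coeff_C_mul, zero_mul, zero_sub]
  have g1 : ∀ k, ((C (starRingEnd ℂ w) * X - C 1) * p).coeff (k + 1)
      = starRingEnd ℂ w * p.coeff k - p.coeff (k + 1) := by
    intro k
    rw [sub_mul, coeff_sub, mul_assoc, coeff_C_mul, coeff_X_mul, C_1, one_mul]
  have g0 : ((C (starRingEnd ℂ w) * X - C 1) * p).coeff 0 = -(p.coeff 0) := by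
    simp [sub_mul, mul_assoc, coeff_C_mul, mul_coeff_zero]
  have tel : ∑ k ∈ Finset.range (m + 1),
      ((1 - Complex.normSq w) * Complex.normSq (p.coeff k)
        - (1 - Complex.normSq w) * Complex.normSq (p.coeff (k + 1)))
      = (1 - Complex.normSq w) * Complex.normSq (p.coeff 0) := by
    rw [Finset.sum_range_sub' (fun k => (1 - Complex.normSq w) * Complex.normSq (p.coeff k))]
    simp [h]
  unfold Sq
  simp only [show m + 2 = m + 1 + 1 from rfl]
  have L : (∑ x ∈ Finset.range (m + 1 + 1), Complex.normSq (((X - C w) * p).coeff x))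
      = (∑ x ∈ Finset.range (m + 1), Complex.normSq (((X - C w) * p).coeff (x + 1)))
        + Complex.normSq (((X - C w) * p).coeff 0) := Finset.sum_range_succ' _ _
  have R : (∑ x ∈ Finset.range (m + 1 + 1),
        Complex.normSq (((C (starRingEnd ℂ w) * X - C 1) * p).coeff x))
      = (∑ x ∈ Finset.range (m + 1),
          Complex.normSq (((C (starRingEnd ℂ w) * X - C 1) * p).coeff (x + 1)))
        + Complex.normSq (((C (starRingEnd ℂ w) * X - C 1) * p).coeff 0) :=
    Finset.sum_range_succ' _ _
  rw [L, R]
  simp only [h1, g1, h0, g0]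
  have expand : ∀ k ∈ Finset.range (m + 1),
      Complex.normSq (p.coeff k - w * p.coeff (k + 1))
      = Complex.normSq (starRingEnd ℂ w * p.coeff k - p.coeff (k + 1))
        + ((1 - Complex.normSq w) * Complex.normSq (p.coeff k)
          - (1 - Complex.normSq w) * Complex.normSq (p.coeff (k + 1))) := by
    intro k _
    have := ptwise (p.coeff k) (p.coeff (k + 1)) w
    linarith [this]
  rw [Finset.sum_congr rfl expand, Finset.sum_add_distrib, tel]
  rw [Complex.normSq_neg, Complex.normSq_neg, Complex.normSq_mul]
  ring

lemma natDegree_flipf_le (w : ℂ) : (flipf w).natDegree ≤ 1 := by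
  unfold flipf
  split
  · refine (natDegree_sub_le _ _).trans ?_
    simp only [natDegree_C, max_le_iff]
    exact ⟨(natDegree_C_mul_le _ _).trans (by simp), by omega⟩
  · exact (natDegree_sub_le _ _).trans (by simp)

lemma natDegree_flip_prod_le (l : List ℂ) : ((l.map flipf).prod).natDegree ≤ l.length := by
  refine (natDegree_list_prod_le _).trans ?_
  calc ((l.map flipf).map natDegree).sum ≤ ((l.map flipf).map (fun _ => 1)).sum := by
        refine List.sum_le_sum ?_
        intro p hp
        obtain ⟨w, _, rfl⟩ := List.mem_map.mp hp
        exact natDegree_flipf_le w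
    _ = l.length := by simp [Function.comp_def]

lemma mix (m : ℕ) (l : List ℂ) : ∀ q : Polynomial ℂ,
    q.natDegree + l.length ≤ m + 1 →
    Sq (m + 2) (q * (l.map (fun w => X - C w)).prod)
      = Sq (m + 2) (q * (l.map flipf).prod) := by
  induction l with
  | nil => intro q h; simp
  | cons w t ih =>
    intro q h
    simp only [List.length_cons] at h
    have hq1 : (q * (X - C w)).natDegree + t.length ≤ m + 1 := by
      have h1 : (q * (X - C w)).natDegree ≤ q.natDegree + 1 := by
        refine natDegree_mul_le.trans ?_
        have : (X - C w).natDegree ≤ 1 := (natDegree_sub_le _ _).trans (by simp)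
        omega
      omega
    have hdeg : (q * (t.map flipf).prod).natDegree < m + 1 := by
      have := natDegree_mul_le (p := q) (q := (t.map flipf).prod)
      have := natDegree_flip_prod_le t
      omega
    have hc : (q * (t.map flipf).prod).coeff (m + 1) = 0 :=
      coeff_eq_zero_of_natDegree_lt hdeg
    have e1 : q * ((w :: t).map (fun v => X - C v)).prod
        = (q * (X - C w)) * (t.map (fun v => X - C v)).prod := by
      simp [mul_assoc]
    have e2 : (q * (X - C w)) * (t.map flipf).prod
        = (X - C w) * (q * (t.map flipf).prod) := by ring
    have e3 : (flipf w) * (q * (t.map flipf).prod)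
        = q * ((w :: t).map flipf).prod := by
      simp only [List.map_cons, List.prod_cons]; ring
    calc Sq (m + 2) (q * ((w :: t).map (fun v => X - C v)).prod)
        = Sq (m + 2) ((q * (X - C w)) * (t.map (fun v => X - C v)).prod) := by rw [e1]
      _ = Sq (m + 2) ((q * (X - C w)) * (t.map flipf).prod) := ih _ hq1
      _ = Sq (m + 2) ((X - C w) * (q * (t.map flipf).prod)) := by rw [e2]
      _ = Sq (m + 2) ((flipf w) * (q * (t.map flipf).prod)) := by
          unfold flipf
          split
          · exact swapL2 w _ m hc
          · rfl
      _ = Sq (m + 2) (q * ((w :: t).map flipf).prod) := by rw [e3]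

lemma norm_coeff_flipf_one (w : ℂ) : ‖(flipf w).coeff 1‖ = max 1 ‖w‖ := by
  unfold flipf
  split
  · next h =>
    simp only [coeff_sub, coeff_C_mul, coeff_X_one, mul_one, coeff_C]
    simp only [if_neg (one_ne_zero)]
    rw [sub_zero, RCLike.norm_conj]
    exact (max_eq_right h.le).symm
  · next h =>
    simp only [coeff_sub, coeff_X_one, coeff_C, if_neg (one_ne_zero), sub_zero, norm_one]
    exact (max_eq_left (not_lt.mp h)).symm

/-- Landau's inequality: the Mahler measure of a polynomial is at most the Euclidean norm
of its coefficient vector, `M(f) ≤ ‖f‖₂`. -/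
theorem mahler_le_l2norm (n : ℕ) (hn : 1 ≤ n) (f : Polynomial ℂ) (a : ℂ) (ha : a ≠ 0)
    (z : Fin n → ℂ) (hf : f = C a * ∏ i, (X - C (z i))) :
    ‖a‖ * ∏ i, max 1 ‖z i‖ ≤
      Real.sqrt (∑ k ∈ Finset.range (n + 1), ‖f.coeff k‖ ^ 2) := by
  obtain ⟨m, rfl⟩ : ∃ m, n = m + 1 := ⟨n - 1, by omega⟩
  set l : List ℂ := List.ofFn z with hl
  have hlen : l.length = m + 1 := by simp [hl]
  have hA : (∏ i, (X - C (z i))) = (l.map (fun w => X - C w)).prod := by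
    rw [hl, List.map_ofFn, List.prod_ofFn]
    rfl
  set g : Polynomial ℂ := C a * (l.map flipf).prod with hg
  have hmix : Sq (m + 2) f = Sq (m + 2) g := by
    rw [hf, hA, hg]
    exact mix m l (C a) (by simp [hlen])
  have hco : g.coeff (m + 1) = a * ∏ i, (flipf (z i)).coeff 1 := by
    rw [hg, coeff_C_mul]
    congr 1
    have hd : ∀ p ∈ l.map flipf, p.natDegree ≤ 1 := by
      intro p hp
      obtain ⟨w, _, rfl⟩ := List.mem_map.mp hp
      exact natDegree_flipf_le w
    have := coeff_list_prod_of_natDegree_le (l.map flipf) 1 hd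
    rw [List.length_map, hlen, mul_one] at this
    rw [this, hl, List.map_ofFn, List.map_ofFn, List.prod_ofFn]
    rfl
  have hnorm : ‖g.coeff (m + 1)‖ = ‖a‖ * ∏ i, max 1 ‖z i‖ := by
    rw [hco, norm_mul, norm_prod]
    congr 1
    exact Finset.prod_congr rfl (fun i _ => norm_coeff_flipf_one (z i))
  apply Real.le_sqrt_of_sq_le
  have hfs : ∑ k ∈ Finset.range (m + 1 + 1), ‖f.coeff k‖ ^ 2 = Sq (m + 2) f := by
    unfold Sq
    exact Finset.sum_congr rfl (fun k _ => by
      rw [← Complex.sq_norm])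
  rw [hfs, hmix, ← hnorm]
  unfold Sq
  have : Complex.normSq (g.coeff (m + 1)) ≤
      ∑ k ∈ Finset.range (m + 2), Complex.normSq (g.coeff k) :=
    Finset.single_le_sum (fun i _ => Complex.normSq_nonneg _)
      (Finset.self_mem_range_succ (m + 1))
  calc ‖g.coeff (m + 1)‖ ^ 2 = Complex.normSq (g.coeff (m + 1)) := by
        rw [← Complex.sq_norm]
    _ ≤ _ := this
end

section
/- For polynomials f, g of degrees k, m ≥ 1 over a commutative ring, there exist polynomials s, t with deg s < m and deg t < k such that Res(f, g) = s·f + t·g; in particular the resultant lies in the ideal generated by f and g. -/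
open Polynomial Finset Matrix

/-- The Sylvester matrix of two polynomials. -/
noncomputable def sylvesterMatrix {R : Type*} [CommRing R] (f g : Polynomial R) :
    Matrix (Fin (f.natDegree + g.natDegree)) (Fin (f.natDegree + g.natDegree)) R :=
  Matrix.of fun i j =>
    if (j : ℕ) < g.natDegree then
      (if (j : ℕ) ≤ (i : ℕ) then f.coeff ((i : ℕ) - (j : ℕ)) else 0)
    else
      (if (j : ℕ) - g.natDegree ≤ (i : ℕ) then g.coeff ((i : ℕ) - ((j : ℕ) - g.natDegree))
       else 0)

/-- The resultant of two polynomials, as the determinant of their Sylvester matrix. -/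
noncomputable def resultant {R : Type*} [CommRing R] (f g : Polynomial R) : R :=
  (sylvesterMatrix f g).det


/-- Bézout-type representation of the resultant: `Res(f, g) = s·f + t·g` with
`deg s < deg g` and `deg t < deg f`; in particular the resultant lies in the ideal `⟨f, g⟩`. -/
theorem resultant_mem_ideal {R : Type*} [CommRing R] (f g : Polynomial R)
    (hk : 1 ≤ f.natDegree) (hm : 1 ≤ g.natDegree) :
    ∃ s t : Polynomial R, s.natDegree < g.natDegree ∧ t.natDegree < f.natDegree ∧
      C (_root_.resultant f g) = s * f + t * g ∧
      C (_root_.resultant f g) ∈ Ideal.span {f, g} := by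
  classical
  set k := f.natDegree with hkdef
  set m := g.natDegree with hmdef
  have hn : 0 < k + m := by omega
  set M := sylvesterMatrix f g with hM
  set A0 : Matrix (Fin (k + m)) (Fin (k + m)) (Polynomial R) := (M.map C)ᵀ with hA0
  -- the vector of shifted polynomials
  set b : Fin (k + m) → Polynomial R := fun j =>
    if (j : ℕ) < m then f * X ^ (j : ℕ) else g * X ^ ((j : ℕ) - m) with hb
  -- Key: b j = ∑ i, C (M i j) * X^i
  have hbsum : ∀ j : Fin (k + m), b j = ∑ i : Fin (k + m), C (M i j) * X ^ (i : ℕ) := by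
    intro j
    have hMij : ∀ i : Fin (k + m), M i j = (b j).coeff (i : ℕ) := by
      intro i
      simp only [hM, sylvesterMatrix, Matrix.of_apply, hb]
      by_cases hj : (j : ℕ) < m
      · simp [hj, ← hmdef, coeff_mul_X_pow']
      · simp [hj, ← hmdef, coeff_mul_X_pow']
    have hdeg : (b j).natDegree < k + m := by
      have h1 : (f * X ^ (j : ℕ)).natDegree ≤ k + (j : ℕ) :=
        natDegree_mul_le.trans (by exact Nat.add_le_add_left (natDegree_X_pow_le _) _)
      have h2 : (g * X ^ ((j : ℕ) - m)).natDegree ≤ m + ((j : ℕ) - m) :=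
        natDegree_mul_le.trans (by exact Nat.add_le_add_left (natDegree_X_pow_le _) _)
      have hjlt := j.isLt
      simp only [hb]
      split_ifs with hj <;> omega
    conv_lhs => rw [(b j).as_sum_range' (k + m) hdeg]
    rw [← Fin.sum_univ_eq_sum_range (fun i => monomial i ((b j).coeff i)) (k + m)]
    refine Finset.sum_congr rfl fun i _ => ?_
    rw [hMij i, C_mul_X_pow_eq_monomial]
  set i0 : Fin (k + m) := ⟨0, hn⟩ with hi0def
  have hi0 : (i0 : ℕ) = 0 := rfl
  -- determinant of A0 is C (_root_.resultant f g)
  have hdetA0 : A0.det = C (_root_.resultant f g) := by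
    rw [hA0, Matrix.det_transpose, ← RingHom.mapMatrix_apply, ← RingHom.map_det]
    rfl
  -- first computation of cramer A0 b 0 : it equals det A0
  have key1 : A0.cramer b i0 = A0.det := by
    have hb2 : b = ∑ i : Fin (k + m), (X : Polynomial R) ^ (i : ℕ) • (fun j : Fin (k + m) => C (M i j) : Fin (k + m) → Polynomial R) := by
      funext j
      rw [hbsum j, Finset.sum_apply]
      refine Finset.sum_congr rfl fun i _ => ?_
      rw [Pi.smul_apply, smul_eq_mul, mul_comm]
    rw [hb2, map_sum, Finset.sum_apply]
    have hcol : ∀ i : Fin (k + m), A0.cramer (fun j => C (M i j)) = Pi.single i A0.det := by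
      intro i
      exact Matrix.cramer_row_self A0 (fun j => C (M i j)) i (fun j => rfl)
    simp only [LinearMap.map_smul, Pi.smul_apply, hcol, smul_eq_mul, Pi.single_apply,
      mul_ite, mul_zero]
    rw [Finset.sum_ite_eq]
    simp [hi0]
  -- cofactors
  set e : Fin (k + m) → R := fun j =>
    (Mᵀ.updateCol i0 (fun j' => if j = j' then (1:R) else 0)).det with he
  have hc : ∀ j : Fin (k + m),
      A0.cramer (fun j' => if j = j' then (1 : Polynomial R) else 0) i0 = C (e j) := by
    intro j
    rw [Matrix.cramer_apply, he, RingHom.map_det, RingHom.mapMatrix_apply]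
    congr 1
    ext p q
    by_cases hq : q = i0
    · subst hq
      simp [Matrix.updateCol_apply, Matrix.map_apply, apply_ite C]
    · simp [Matrix.updateCol_apply, hq, hA0, Matrix.map_apply, Matrix.transpose_apply]
  -- second computation of cramer A0 b 0
  have key2 : A0.cramer b i0 = ∑ j : Fin (k + m), b j * C (e j) := by
    conv_lhs => rw [pi_eq_sum_univ b]
    rw [map_sum, Finset.sum_apply]
    refine Finset.sum_congr rfl fun j _ => ?_
    rw [LinearMap.map_smul, Pi.smul_apply, hc j, smul_eq_mul]
  have hmain : C (_root_.resultant f g) = ∑ j : Fin (k + m), b j * C (e j) := by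
    rw [← key2, key1, hdetA0]
  -- define s and t
  set s : Polynomial R := ∑ j ∈ univ.filter (fun j : Fin (k + m) => (j : ℕ) < m),
    C (e j) * X ^ (j : ℕ) with hs
  set t : Polynomial R := ∑ j ∈ univ.filter (fun j : Fin (k + m) => ¬ (j : ℕ) < m),
    C (e j) * X ^ ((j : ℕ) - m) with ht
  have hrepr : C (_root_.resultant f g) = s * f + t * g := by
    rw [hmain, hs, ht, Finset.sum_mul, Finset.sum_mul,
      ← Finset.sum_filter_add_sum_filter_not univ (fun j : Fin (k + m) => (j : ℕ) < m)
        (fun j => b j * C (e j))]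
    congr 1
    · refine Finset.sum_congr rfl fun j hj => ?_
      have hj' : (j : ℕ) < m := (Finset.mem_filter.mp hj).2
      simp only [hb, hj', if_true]
      ring
    · refine Finset.sum_congr rfl fun j hj => ?_
      have hj' : ¬ (j : ℕ) < m := (Finset.mem_filter.mp hj).2
      simp only [hb, hj', if_false]
      ring
  have hsdeg : s.natDegree < m := by
    have : s.natDegree ≤ m - 1 := by
      refine natDegree_sum_le_of_forall_le _ _ fun j hj => ?_
      have hj' : (j : ℕ) < m := (Finset.mem_filter.mp hj).2
      refine natDegree_mul_le.trans ?_
      have := natDegree_X_pow_le (R := R) (j : ℕ)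
      simp only [natDegree_C, zero_add]
      omega
    omega
  have htdeg : t.natDegree < k := by
    have : t.natDegree ≤ k - 1 := by
      refine natDegree_sum_le_of_forall_le _ _ fun j hj => ?_
      have hj' : ¬ (j : ℕ) < m := (Finset.mem_filter.mp hj).2
      have hjlt := j.isLt
      refine natDegree_mul_le.trans ?_
      have := natDegree_X_pow_le (R := R) ((j : ℕ) - m)
      simp only [natDegree_C, zero_add]
      omega
    omega
  exact ⟨s, t, hsdeg, htdeg, hrepr, Ideal.mem_span_pair.mpr ⟨s, t, hrepr.symm⟩⟩
end
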